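/- Let J ⊆ I ⊊ R be ideals of a Noetherian commutative ring R such that the image of I in R/J contains a regular element (non-zero-divisor) of R/J. Then the R/J-torsion submodule of the Aluffi algebra 𝒜_{R↠R/J}(I/J) equals the kernel of the natural surjection 𝒜_{R↠R/J}(I/J) ↠ Rees_{R/J}(I/J), i.e., equals the Valabrega–Valla module ⊕_{t≥2} (J ∩ I^t)/(J·I^{t-1}). -/

import Mathlib

open Polynomial

variable {R : Type*} [CommRing R]

/-- The defining ideal `(J, J̃)·Rees_R(I)` of the Aluffi algebra inside the Rees algebra. -/
noncomputable def aluffiIdeal (I J : Ideal R) : Ideal (reesAlgebra I) :=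
  Ideal.span {x : reesAlgebra I | ∃ a ∈ J, (x : R[X]) = C a ∨ (x : R[X]) = C a * X}

/-- The (R-embedded) Aluffi algebra of `I/J`, presented as `Rees_R(I)/(J, J̃)Rees_R(I)`. -/
noncomputable abbrev AluffiAlgebra (I J : Ideal R) :=
  reesAlgebra I ⧸ aluffiIdeal I J

/-- The extended–contracted ideal `𝔭̃ = 𝔭R[u] ∩ Rees_R(I) = ⊕_{t≥0} (𝔭 ∩ I^t)u^t` of an
ideal `𝔭 ⊆ R` inside the Rees algebra of `I`. -/
noncomputable def tildeIdeal (I p : Ideal R) : Ideal (reesAlgebra I) :=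
  Ideal.comap ((reesAlgebra I).val.toRingHom) (p.map (Polynomial.C : R →+* R[X]))

lemma mem_tildeIdeal_iff {I J : Ideal R} (y : reesAlgebra I) :
    y ∈ tildeIdeal I J ↔ ∀ n, (y : R[X]).coeff n ∈ J := by
  rw [tildeIdeal, Ideal.mem_comap]
  exact Ideal.mem_map_C_iff

lemma aluffi_le_tilde {I J : Ideal R} : aluffiIdeal I J ≤ tildeIdeal I J := by
  rw [aluffiIdeal, Ideal.span_le]
  rintro x ⟨a, ha, h | h⟩ <;> rw [SetLike.mem_coe, tildeIdeal, Ideal.mem_comap] <;>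
    simp only [AlgHom.toRingHom_eq_coe, RingHom.coe_coe, Subalgebra.coe_val, h]
  · exact Ideal.mem_map_of_mem _ ha
  · exact Ideal.mul_mem_right _ _ (Ideal.mem_map_of_mem _ ha)

lemma key_mem {I J : Ideal R} (hJI : J ≤ I) {b : R} (hb : b ∈ I) (n : ℕ) (y : reesAlgebra I)
    (hyJ : ∀ t, (y : R[X]).coeff t ∈ J) (hdeg : (y : R[X]).natDegree ≤ n) :
    algebraMap R (reesAlgebra I) (b ^ n) * y ∈ aluffiIdeal I J := by
  classical
  set p : R[X] := (y : R[X]) with hp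
  have hterm_mem : ∀ t, b ^ n * p.coeff t ∈ I ^ t := by
    intro t
    rcases le_or_gt t n with ht | ht
    · exact Ideal.mul_mem_right _ _ (Ideal.pow_le_pow_right ht (Ideal.pow_mem_pow hb n))
    · have : p.coeff t = 0 := coeff_eq_zero_of_natDegree_lt (lt_of_le_of_lt hdeg ht)
      simp [this]
  set term : ℕ → reesAlgebra I := fun t =>
    ⟨monomial t (b ^ n * p.coeff t), reesAlgebra.monomial_mem.mpr (hterm_mem t)⟩ with hterm
  have hmem : ∀ t ∈ Finset.range (n + 1), term t ∈ aluffiIdeal I J := by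
    intro t ht
    rw [Finset.mem_range, Nat.lt_succ_iff] at ht
    cases t with
    | zero =>
      have hgen : (⟨C (p.coeff 0), (reesAlgebra I).algebraMap_mem _⟩ : reesAlgebra I) ∈
          aluffiIdeal I J :=
        Ideal.subset_span ⟨p.coeff 0, hyJ 0, Or.inl rfl⟩
      have : term 0 = (⟨C (p.coeff 0), (reesAlgebra I).algebraMap_mem _⟩ : reesAlgebra I) *
          algebraMap R (reesAlgebra I) (b ^ n) := by
        apply Subtype.ext
        push_cast
        simp [hterm, algebraMap_eq, ← C_mul, mul_comm]
      rw [this]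
      exact Ideal.mul_mem_right _ _ hgen
    | succ s =>
      have hXmem : (C (p.coeff (s + 1)) * X : R[X]) ∈ reesAlgebra I := by
        rw [C_mul_X_eq_monomial]
        exact reesAlgebra.monomial_mem.mpr (by simpa using hJI (hyJ (s + 1)))
      have hgen : (⟨C (p.coeff (s + 1)) * X, hXmem⟩ : reesAlgebra I) ∈ aluffiIdeal I J :=
        Ideal.subset_span ⟨p.coeff (s + 1), hyJ (s + 1), Or.inr rfl⟩
      have hmul : (monomial s (b ^ n) : R[X]) ∈ reesAlgebra I :=
        reesAlgebra.monomial_mem.mpr (Ideal.pow_le_pow_right (by omega) (Ideal.pow_mem_pow hb n))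
      have : term (s + 1) = (⟨C (p.coeff (s + 1)) * X, hXmem⟩ : reesAlgebra I) *
          ⟨monomial s (b ^ n), hmul⟩ := by
        apply Subtype.ext
        push_cast
        simp only [hterm, ← C_mul_X_pow_eq_monomial, pow_succ, C_mul]
        ring
      rw [this]
      exact Ideal.mul_mem_right _ _ hgen
  have hsum : algebraMap R (reesAlgebra I) (b ^ n) * y = ∑ t ∈ Finset.range (n + 1), term t := by
    apply Subtype.ext
    push_cast
    rw [← map_pow, algebraMap_eq]
    conv_lhs => rw [show (y : R[X]) = p from rfl, p.as_sum_range' (n + 1) (Nat.lt_succ_of_le hdeg)]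
    rw [Finset.mul_sum]
    refine Finset.sum_congr rfl fun t _ => ?_
    rw [C_mul_monomial]
  rw [hsum]
  exact Ideal.sum_mem _ hmem

/-- if `I/J` contains a regular element of `R/J`, the `R/J`-torsion of the
Aluffi algebra is the kernel of the natural surjection `𝒜_{R↠R/J}(I/J) ↠ Rees_{R/J}(I/J)`,
i.e. the Valabrega–Valla module `⊕_{t≥2}(J ∩ I^t)/(J·I^{t-1})`; the latter kernel is the
image of `J̃ = ⊕_t (J ∩ I^t)u^t` in the Aluffi algebra. -/
theorem aluffi_torsion_is_valabrega_valla [IsNoetherianRing R]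
    (I J : Ideal R) (hJI : J ≤ I) (hI : I ≠ ⊤)
    (hreg : ∃ b ∈ I, Ideal.Quotient.mk J b ∈ nonZeroDivisors (R ⧸ J)) :
    ∀ x : AluffiAlgebra I J,
      (x ∈ (tildeIdeal I J).map (Ideal.Quotient.mk (aluffiIdeal I J)) ↔
        ∃ r : R, Ideal.Quotient.mk J r ∈ nonZeroDivisors (R ⧸ J) ∧
          algebraMap R (AluffiAlgebra I J) r * x = 0) := by
  intro x
  have halg : ∀ (r : R), algebraMap R (AluffiAlgebra I J) r =
      Ideal.Quotient.mk (aluffiIdeal I J) (algebraMap R (reesAlgebra I) r) := by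
    intro r
    rfl
  constructor
  · rintro hx
    obtain ⟨y, hy, rfl⟩ := Ideal.mem_map_iff_of_surjective _ Ideal.Quotient.mk_surjective |>.mp hx
    obtain ⟨b, hbI, hbreg⟩ := hreg
    refine ⟨b ^ (y : R[X]).natDegree, by simpa using pow_mem hbreg _, ?_⟩
    rw [halg, ← map_mul, Ideal.Quotient.eq_zero_iff_mem]
    exact key_mem hJI hbI _ y ((mem_tildeIdeal_iff y).mp hy) le_rfl
  · rintro ⟨r, hr, hrx⟩
    obtain ⟨y, rfl⟩ := Ideal.Quotient.mk_surjective x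
    rw [halg, ← map_mul, Ideal.Quotient.eq_zero_iff_mem] at hrx
    have hcoeff := (mem_tildeIdeal_iff _).mp (aluffi_le_tilde hrx)
    refine Ideal.mem_map_of_mem _ ((mem_tildeIdeal_iff y).mpr fun t => ?_)
    have ht : r * (y : R[X]).coeff t ∈ J := by
      have := hcoeff t
      simpa [algebraMap_eq, coeff_C_mul] using this
    have : Ideal.Quotient.mk J ((y : R[X]).coeff t) * Ideal.Quotient.mk J r = 0 := by
      rw [← map_mul, Ideal.Quotient.eq_zero_iff_mem, mul_comm]
      exact ht
    rw [← Ideal.Quotient.eq_zero_iff_mem]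
    exact hr.2 _ this
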